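/- Let E be a T-invariant sublinear expectation on (Ω, H). Then for any l, d ∈ ℕ, (E^{(d)})^{(l)} = E^{(gcd(l,d))}, where the outer operation is the periodic averaging construction applied to the T-invariant sublinear expectation E^{(d)}. -/

import Mathlib

open MeasureTheory Filter Function Topology

structure IsHSpace {Ω : Type*} (T : Ω → Ω) (H : Set (Ω → ℝ)) : Prop where
  add_mem : ∀ f ∈ H, ∀ g ∈ H, f + g ∈ H
  smul_mem : ∀ (c : ℝ), ∀ f ∈ H, c • f ∈ H
  one_mem : (fun _ : Ω => (1 : ℝ)) ∈ H
  comp_mem : ∀ f ∈ H, f ∘ T ∈ H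
  abs_mem : ∀ f ∈ H, (fun ω => |f ω|) ∈ H

/-- `E` is a `T`-invariant sublinear expectation on `(Ω, H)`. -/
structure IsISE {Ω : Type*} (T : Ω → Ω) (H : Set (Ω → ℝ)) (E : (Ω → ℝ) → ℝ) : Prop where
  mono : ∀ f ∈ H, ∀ g ∈ H, (∀ ω, f ω ≤ g ω) → E f ≤ E g
  const : ∀ c : ℝ, E (fun _ => c) = c
  subadd : ∀ f ∈ H, ∀ g ∈ H, E (f + g) ≤ E f + E g
  homog : ∀ f ∈ H, ∀ c : ℝ, 0 ≤ c → E (c • f) = c * E f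
  inv : ∀ f ∈ H, E (f ∘ T) = E f

/-- The Birkhoff-type sum `∑_{k=0}^{n-1} f ∘ T^{kd}`. -/
def bsum {Ω : Type*} (T : Ω → Ω) (d : ℕ) (f : Ω → ℝ) (n : ℕ) : Ω → ℝ :=
  fun ω => ∑ k ∈ Finset.range n, f (T^[k * d] ω)

section Aux

variable {Ω : Type*} {T : Ω → Ω} {H : Set (Ω → ℝ)} {E : (Ω → ℝ) → ℝ}

lemma const_mem (hH : IsHSpace T H) (c : ℝ) : (fun _ : Ω => c) ∈ H := by
  have h := hH.smul_mem c _ hH.one_mem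
  have h2 : c • (fun _ : Ω => (1:ℝ)) = fun _ : Ω => c := by funext ω; simp
  rwa [h2] at h

lemma iter_mem (hH : IsHSpace T H) {f : Ω → ℝ} (hf : f ∈ H) : ∀ e : ℕ, f ∘ T^[e] ∈ H := by
  intro e
  induction e with
  | zero => simpa using hf
  | succ e ih =>
      have h : f ∘ T^[e+1] = (f ∘ T^[e]) ∘ T := by
        rw [Function.iterate_succ]; rfl
      rw [h]; exact hH.comp_mem _ ih

lemma E_iter (hH : IsHSpace T H) (hE : IsISE T H E) {f : Ω → ℝ} (hf : f ∈ H) :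
    ∀ e : ℕ, E (f ∘ T^[e]) = E f := by
  intro e
  induction e with
  | zero => simp
  | succ e ih =>
      have h : f ∘ T^[e+1] = (f ∘ T^[e]) ∘ T := by
        rw [Function.iterate_succ]; rfl
      rw [h, hE.inv _ (iter_mem hH hf e), ih]

lemma smul_iter_mem (hH : IsHSpace T H) {h : Ω → ℝ} (hh : h ∈ H) (c : ℝ) (e : ℕ) :
    (fun ω => c * h (T^[e] ω)) ∈ H := by
  have h1 : (fun ω => c * h (T^[e] ω)) = c • (h ∘ T^[e]) := by funext ω; simp
  rw [h1]; exact hH.smul_mem c _ (iter_mem hH hh e)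

lemma E_smul_iter (hH : IsHSpace T H) (hE : IsISE T H E) {h : Ω → ℝ} (hh : h ∈ H)
    {c : ℝ} (hc : 0 ≤ c) (e : ℕ) :
    E (fun ω => c * h (T^[e] ω)) = c * E h := by
  have h1 : (fun ω => c * h (T^[e] ω)) = c • (h ∘ T^[e]) := by funext ω; simp
  rw [h1, hE.homog _ (iter_mem hH hh e) c hc, E_iter hH hE hh]

lemma ws_mem (hH : IsHSpace T H) {f : Ω → ℝ} (hf : f ∈ H) (s : Finset ℕ) (w : ℕ → ℝ)
    (e : ℕ → ℕ) : (fun ω => ∑ x ∈ s, w x * f (T^[e x] ω)) ∈ H := by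
  classical
  induction s using Finset.cons_induction with
  | empty => simpa using const_mem hH 0
  | cons a s ha ih =>
      have h : (fun ω => ∑ x ∈ Finset.cons a s ha, w x * f (T^[e x] ω))
          = (fun ω => w a * f (T^[e a] ω)) + (fun ω => ∑ x ∈ s, w x * f (T^[e x] ω)) := by
        funext ω; simp [Finset.sum_cons, Finset.sum_insert ha]
      rw [h]
      exact hH.add_mem _ (smul_iter_mem hH hf (w a) (e a)) _ ih

lemma E_ws_le (hH : IsHSpace T H) (hE : IsISE T H E) {f : Ω → ℝ} (hf : f ∈ H)
    (s : Finset ℕ) (w : ℕ → ℝ) (e : ℕ → ℕ) :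
    E (fun ω => ∑ x ∈ s, w x * f (T^[e x] ω)) ≤ (∑ x ∈ s, |w x|) * E (fun ω => |f ω|) := by
  classical
  have hF : (fun ω => |f ω|) ∈ H := hH.abs_mem f hf
  induction s using Finset.cons_induction with
  | empty =>
      have h0 : (fun ω : Ω => ∑ x ∈ (∅ : Finset ℕ), w x * f (T^[e x] ω)) = fun _ => (0:ℝ) := by
        funext ω; simp
      rw [h0, hE.const 0]
      simp
  | cons a s ha ih =>
      have h : (fun ω => ∑ x ∈ Finset.cons a s ha, w x * f (T^[e x] ω))
          = (fun ω => w a * f (T^[e a] ω)) + (fun ω => ∑ x ∈ s, w x * f (T^[e x] ω)) := by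
        funext ω; simp [Finset.sum_cons, Finset.sum_insert ha]
      have hterm : E (fun ω => w a * f (T^[e a] ω)) ≤ |w a| * E (fun ω => |f ω|) := by
        have hle : E (fun ω => w a * f (T^[e a] ω))
            ≤ E (fun ω => |w a| * (fun ω' => |f ω'|) (T^[e a] ω)) := by
          apply hE.mono _ (smul_iter_mem hH hf (w a) (e a)) _
            (smul_iter_mem hH hF |w a| (e a))
          intro ω
          calc w a * f (T^[e a] ω) ≤ |w a * f (T^[e a] ω)| := le_abs_self _
            _ = |w a| * |f (T^[e a] ω)| := abs_mul _ _
        calc E (fun ω => w a * f (T^[e a] ω))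
            ≤ E (fun ω => |w a| * (fun ω' => |f ω'|) (T^[e a] ω)) := hle
          _ = |w a| * E (fun ω => |f ω|) := E_smul_iter hH hE hF (abs_nonneg _) (e a)
      calc E (fun ω => ∑ x ∈ Finset.cons a s ha, w x * f (T^[e x] ω))
          ≤ E (fun ω => w a * f (T^[e a] ω)) + E (fun ω => ∑ x ∈ s, w x * f (T^[e x] ω)) := by
            rw [h]
            exact hE.subadd _ (smul_iter_mem hH hf (w a) (e a)) _ (ws_mem hH hf s w e)
        _ ≤ |w a| * E (fun ω => |f ω|) + (∑ x ∈ s, |w x|) * E (fun ω => |f ω|) :=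
            add_le_add hterm ih
        _ = (∑ x ∈ Finset.cons a s ha, |w x|) * E (fun ω => |f ω|) := by
            rw [Finset.sum_cons, add_mul]

lemma bsum_mem (hH : IsHSpace T H) {f : Ω → ℝ} (hf : f ∈ H) (δ N : ℕ) :
    bsum T δ f N ∈ H := by
  have h1 : bsum T δ f N = fun ω => ∑ x ∈ Finset.range N, (1:ℝ) * f (T^[x*δ] ω) := by
    funext ω; simp [bsum]
  rw [h1]; exact ws_mem hH hf _ _ _

lemma count_mod {d' : ℕ} (hd' : 0 < d') (a r : ℕ) (hr : r < d') :
    ((Finset.range (d' * a)).filter (fun j => j % d' = r)).card = a := by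
  have himg : (Finset.range (d' * a)).filter (fun j => j % d' = r)
      = (Finset.range a).image (fun t => d' * t + r) := by
    ext j
    simp only [Finset.mem_filter, Finset.mem_range, Finset.mem_image]
    constructor
    · rintro ⟨hj, hm⟩
      refine ⟨j / d', ?_, ?_⟩
      · exact (Nat.div_lt_iff_lt_mul hd').mpr (by rwa [mul_comm] at hj)
      · rw [← hm]; exact Nat.div_add_mod j d'
    · rintro ⟨t, ht, rfl⟩
      refine ⟨?_, ?_⟩
      · calc d' * t + r < d' * t + d' := by omega
          _ = d' * (t + 1) := by ring
          _ ≤ d' * a := Nat.mul_le_mul_left _ ht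
      · rw [Nat.mul_add_mod]; exact Nat.mod_eq_of_lt hr
  rw [himg, Finset.card_image_of_injective _
    (fun x y h => Nat.eq_of_mul_eq_mul_left hd' (Nat.add_right_cancel h)), Finset.card_range]

lemma count_res {l' d' : ℕ} (hcop : Nat.Coprime l' d') (hd' : 0 < d') (a x : ℕ) :
    ((Finset.range (d' * a)).filter (fun j => (j * l') % d' = x % d')).card = a := by
  rcases eq_or_lt_of_le (Nat.one_le_iff_ne_zero.mpr hd'.ne') with h1 | h1
  · have hd1 : d' = 1 := h1.symm
    subst hd1
    simp [Nat.mod_one]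
  · obtain ⟨u, -, hu⟩ := Nat.exists_mul_mod_eq_one_of_coprime hcop h1
    set r := (x * u) % d' with hrdef
    have hr : r < d' := Nat.mod_lt _ hd'
    have h5 : l' * u ≡ 1 [MOD d'] := by
      show l' * u % d' = 1 % d'
      rw [hu, Nat.mod_eq_of_lt h1]
    have hxlu : x * (l' * u) ≡ x [MOD d'] := by
      simpa using Nat.ModEq.mul_left x h5
    have hrl : r * l' ≡ x [MOD d'] := by
      have h6 : r * l' ≡ (x * u) * l' [MOD d'] := (Nat.mod_modEq (x * u) d').mul_right l'
      rw [show (x * u) * l' = x * (l' * u) from by ring] at h6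
      exact h6.trans hxlu
    have hcond : ∀ j, ((j * l') % d' = x % d') ↔ j % d' = r := by
      intro j
      constructor
      · intro h
        have hjl : j * l' ≡ x [MOD d'] := h
        have hA : j ≡ (j * l') * u [MOD d'] := by
          have := (Nat.ModEq.mul_left j h5).symm
          simpa [mul_assoc] using this
        have hB : j ≡ x * u [MOD d'] := hA.trans (hjl.mul_right u)
        exact hB
      · intro h
        have h9 : j ≡ r [MOD d'] := by
          show j % d' = r % d'
          rw [h, Nat.mod_eq_of_lt hr]
        exact (h9.mul_right l').trans hrl
    rw [Finset.filter_congr (fun j _ => hcond j)]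
    exact count_mod hd' a r hr

end Aux

section Key

variable {Ω : Type*} {T : Ω → Ω} {H : Set (Ω → ℝ)} {E : (Ω → ℝ) → ℝ}

lemma key_est (hH : IsHSpace T H) (hE : IsISE T H E) {f : Ω → ℝ} (hf : f ∈ H)
    {l d g l' d' : ℕ} (hl' : 0 < l') (hd' : 0 < d')
    (hlg : l = g * l') (hdg : d = g * d') (hcop : Nat.Coprime l' d')
    (a m : ℕ) (hm : d' * a * l' ≤ m * d') :
    |E (bsum T d (bsum T l f (d' * a)) m) - (a : ℝ) * E (bsum T g f (m * d'))|
      ≤ ((2 * (d' * a * l') * a : ℕ) : ℝ) * E (fun ω => |f ω|) := by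
  classical
  set n := d' * a with hn
  set X := n * l' + m * d' with hX
  set P := (Finset.range m) ×ˢ (Finset.range n) with hP
  set c : ℕ → ℕ := fun x => (P.filter (fun p => p.2 * l' + p.1 * d' = x)).card with hc
  have hmaps : ∀ p ∈ P, p.2 * l' + p.1 * d' ∈ Finset.range X := by
    intro p hp
    rw [hP, Finset.mem_product, Finset.mem_range, Finset.mem_range] at hp
    rw [Finset.mem_range, hX]
    have h1 : p.2 * l' < n * l' := (Nat.mul_lt_mul_right hl').mpr hp.2
    have h2 : p.1 * d' < m * d' := (Nat.mul_lt_mul_right hd').mpr hp.1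
    omega
  -- counting facts
  have hcount : ∀ x, ((Finset.range n).filter (fun j => (j * l') % d' = x % d')).card = a := by
    intro x; rw [hn]; exact count_res hcop hd' a x
  have hA1 : ∀ x, c x ≤ a := by
    intro x
    rw [← hcount x, hc]
    apply Finset.card_le_card_of_injOn Prod.snd
    · intro p hp
      rw [Finset.mem_coe, Finset.mem_filter] at hp
      obtain ⟨hpP, hpx⟩ := hp
      rw [hP, Finset.mem_product] at hpP
      rw [Finset.mem_coe, Finset.mem_filter]
      exact ⟨hpP.2, by rw [← hpx, Nat.add_mul_mod_self_right]⟩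
    · intro p hp q hq hpq
      simp only [Finset.coe_filter, Set.mem_setOf_eq] at hp hq
      have h1 : p.2 * l' + p.1 * d' = q.2 * l' + q.1 * d' := by rw [hp.2, hq.2]
      rw [hpq] at h1
      have h2 : p.1 * d' = q.1 * d' := by omega
      exact Prod.ext (Nat.eq_of_mul_eq_mul_right hd' h2) hpq
  have hA2 : ∀ x, n * l' ≤ x → x < m * d' → c x = a := by
    intro x hx1 hx2
    rw [← hcount x, hc]
    apply Finset.card_bij (fun p _ => p.2)
    · intro p hp
      rw [Finset.mem_filter] at hp
      obtain ⟨hpP, hpx⟩ := hp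
      rw [hP, Finset.mem_product] at hpP
      rw [Finset.mem_filter]
      exact ⟨hpP.2, by rw [← hpx, Nat.add_mul_mod_self_right]⟩
    · intro p hp q hq hpq
      rw [Finset.mem_filter] at hp hq
      have h1 : p.2 * l' + p.1 * d' = q.2 * l' + q.1 * d' := by rw [hp.2, hq.2]
      rw [hpq] at h1
      have h2 : p.1 * d' = q.1 * d' := by omega
      exact Prod.ext (Nat.eq_of_mul_eq_mul_right hd' h2) hpq
    · intro j hj
      rw [Finset.mem_filter, Finset.mem_range] at hj
      obtain ⟨hjn, hjmod⟩ := hj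
      have hjl : j * l' ≤ x := le_trans (le_of_lt ((Nat.mul_lt_mul_right hl').mpr hjn)) hx1
      have hdvd : d' ∣ x - j * l' := (Nat.modEq_iff_dvd' hjl).mp hjmod
      have hkd : ((x - j * l') / d') * d' = x - j * l' := Nat.div_mul_cancel hdvd
      have hkm : (x - j * l') / d' < m := by
        have h3 : ((x - j * l') / d') * d' < m * d' := by omega
        exact Nat.lt_of_mul_lt_mul_right h3
      refine ⟨((x - j * l') / d', j), ?_, rfl⟩
      rw [Finset.mem_filter, hP, Finset.mem_product, Finset.mem_range, Finset.mem_range]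
      refine ⟨⟨hkm, hjn⟩, ?_⟩
      show j * l' + ((x - j * l') / d') * d' = x
      omega
  have hA3 : ∑ x ∈ Finset.range X, c x = m * n := by
    have h1 := (Finset.card_eq_sum_card_fiberwise hmaps).symm
    rw [hP, Finset.card_product, Finset.card_range, Finset.card_range] at h1
    exact h1
  -- ℕ bound on total weight deviation
  have hmdX : m * d' ≤ X := by rw [hX]; omega
  have hm' : n * l' ≤ m * d' := hm
  have hWn : (∑ x ∈ Finset.range (m*d'), (a - c x)) + ∑ x ∈ Finset.Ico (m*d') X, c x
      ≤ 2 * (n * l') * a := by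
    have hST : (∑ x ∈ Finset.range (m*d'), c x) + ∑ x ∈ Finset.Ico (m*d') X, c x = m * n := by
      rw [← hA3, Finset.range_eq_Ico, Finset.range_eq_Ico]
      exact Finset.sum_Ico_consecutive _ (Nat.zero_le _) hmdX
    have h4 : (∑ x ∈ Finset.range (m*d'), (a - c x)) + ∑ x ∈ Finset.range (m*d'), c x
        = m * d' * a := by
      rw [← Finset.sum_add_distrib,
        Finset.sum_congr rfl (fun x _ => Nat.sub_add_cancel (hA1 x)),
        Finset.sum_const, Finset.card_range, smul_eq_mul]
    have h6 : (m * d' - n * l') * a ≤ ∑ x ∈ Finset.range (m*d'), c x := by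
      calc (m * d' - n * l') * a = ∑ _x ∈ Finset.Ico (n*l') (m*d'), a := by
            rw [Finset.sum_const, Nat.card_Ico, smul_eq_mul]
        _ = ∑ x ∈ Finset.Ico (n*l') (m*d'), c x :=
            Finset.sum_congr rfl (fun x hx => by
              rw [Finset.mem_Ico] at hx; exact (hA2 x hx.1 hx.2).symm)
        _ ≤ ∑ x ∈ Finset.range (m*d'), c x := by
            apply Finset.sum_le_sum_of_subset
            rw [Finset.range_eq_Ico]
            exact Finset.Ico_subset_Ico (Nat.zero_le _) le_rfl
    have e3 : m * d' * a ≤ (∑ x ∈ Finset.range (m*d'), c x) + n * l' * a := by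
      calc m * d' * a = (m * d' - n * l') * a + n * l' * a := by
            rw [Nat.sub_mul, Nat.sub_add_cancel (Nat.mul_le_mul_right a hm')]
        _ ≤ (∑ x ∈ Finset.range (m*d'), c x) + n * l' * a := add_le_add h6 le_rfl
    have hmn : m * n = m * d' * a := by rw [hn]; ring
    linarith
  -- analytic part
  set F : Ω → ℝ := fun ω => |f ω| with hFdef
  have hF : F ∈ H := hH.abs_mem f hf
  have hEF : 0 ≤ E F := by
    have h0 := hE.const 0
    have hm0 := hE.mono _ (const_mem hH 0) _ hF (fun ω => abs_nonneg (f ω))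
    linarith
  set w2 : ℕ → ℝ := fun x => if x < m * d' then (a:ℝ) else 0 with hw2
  set S1 : Ω → ℝ := fun ω => ∑ x ∈ Finset.range X, (c x : ℝ) * f (T^[x*g] ω) with hS1d
  set S2 : Ω → ℝ := fun ω => ∑ x ∈ Finset.range X, w2 x * f (T^[x*g] ω) with hS2d
  set D1 : Ω → ℝ := fun ω => ∑ x ∈ Finset.range X, ((c x : ℝ) - w2 x) * f (T^[x*g] ω) with hD1d
  set D2 : Ω → ℝ := fun ω => ∑ x ∈ Finset.range X, (w2 x - (c x : ℝ)) * f (T^[x*g] ω) with hD2d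
  have hS1 : bsum T d (bsum T l f n) m = S1 := by
    funext ω
    simp only [bsum, hS1d]
    have hterm : ∀ k j : ℕ, f (T^[j * l] (T^[k * d] ω)) = f (T^[(j * l' + k * d') * g] ω) := by
      intro k j
      rw [← Function.iterate_add_apply]
      rw [show j * l + k * d = (j * l' + k * d') * g from by rw [hlg, hdg]; ring]
    calc ∑ k ∈ Finset.range m, ∑ j ∈ Finset.range n, f (T^[j * l] (T^[k * d] ω))
        = ∑ k ∈ Finset.range m, ∑ j ∈ Finset.range n, f (T^[(j * l' + k * d') * g] ω) :=
          Finset.sum_congr rfl (fun k _ => Finset.sum_congr rfl (fun j _ => hterm k j))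
      _ = ∑ p ∈ P, f (T^[(p.2 * l' + p.1 * d') * g] ω) :=
          (Finset.sum_product' (Finset.range m) (Finset.range n)
            (fun k j => f (T^[(j * l' + k * d') * g] ω))).symm
      _ = ∑ x ∈ Finset.range X, ∑ p ∈ P.filter (fun p => p.2 * l' + p.1 * d' = x),
            f (T^[(p.2 * l' + p.1 * d') * g] ω) :=
          (Finset.sum_fiberwise_of_maps_to hmaps
            (fun p => f (T^[(p.2 * l' + p.1 * d') * g] ω))).symm
      _ = ∑ x ∈ Finset.range X, (c x : ℝ) * f (T^[x * g] ω) := by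
          refine Finset.sum_congr rfl (fun x _ => ?_)
          have hcongr : ∑ p ∈ P.filter (fun p => p.2 * l' + p.1 * d' = x),
                f (T^[(p.2 * l' + p.1 * d') * g] ω)
              = ∑ _p ∈ P.filter (fun p => p.2 * l' + p.1 * d' = x), f (T^[x * g] ω) :=
            Finset.sum_congr rfl (fun p hp => by rw [(Finset.mem_filter.mp hp).2])
          rw [hcongr, Finset.sum_const, nsmul_eq_mul]
  have hbg : bsum T g f (m * d') ∈ H := bsum_mem hH hf g (m * d')
  have hS2E : E S2 = (a:ℝ) * E (bsum T g f (m*d')) := by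
    have h1 : S2 = (a:ℝ) • (bsum T g f (m*d')) := by
      funext ω
      simp only [hS2d, Pi.smul_apply, smul_eq_mul, bsum]
      rw [Finset.mul_sum]
      rw [← Finset.sum_subset (Finset.range_subset_range.mpr hmdX)
        (fun x _ hnx => by
          rw [Finset.mem_range, not_lt] at hnx
          rw [hw2]
          simp only [if_neg (not_lt.mpr hnx), zero_mul])]
      refine Finset.sum_congr rfl (fun x hx => ?_)
      rw [Finset.mem_range] at hx
      rw [hw2]; simp only [if_pos hx]
    rw [h1, hE.homog _ hbg _ (Nat.cast_nonneg a)]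
  have hS1mem : S1 ∈ H := ws_mem hH hf _ _ _
  have hS2mem : S2 ∈ H := ws_mem hH hf _ _ _
  have hD1mem : D1 ∈ H := ws_mem hH hf _ _ _
  have hD2mem : D2 ∈ H := ws_mem hH hf _ _ _
  have hdec1 : S1 = S2 + D1 := by
    funext ω
    simp only [hS1d, hS2d, hD1d, Pi.add_apply]
    rw [← Finset.sum_add_distrib]
    exact Finset.sum_congr rfl (fun x _ => by ring)
  have hdec2 : S2 = S1 + D2 := by
    funext ω
    simp only [hS1d, hS2d, hD2d, Pi.add_apply]
    rw [← Finset.sum_add_distrib]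
    exact Finset.sum_congr rfl (fun x _ => by ring)
  set W : ℝ := ∑ x ∈ Finset.range X, |(c x : ℝ) - w2 x| with hW
  have hD1le : E D1 ≤ W * E F := E_ws_le hH hE hf _ _ _
  have hD2le : E D2 ≤ W * E F := by
    have h1 := E_ws_le hH hE hf (Finset.range X) (fun x => w2 x - (c x : ℝ)) (fun x => x * g)
    have h2 : (∑ x ∈ Finset.range X, |w2 x - (c x : ℝ)|) = W := by
      rw [hW]; exact Finset.sum_congr rfl (fun x _ => abs_sub_comm _ _)
    rw [h2] at h1
    exact h1
  have hup : E (bsum T d (bsum T l f n) m) ≤ E S2 + E D1 := by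
    rw [hS1, hdec1]; exact hE.subadd _ hS2mem _ hD1mem
  have hdown : E S2 ≤ E (bsum T d (bsum T l f n) m) + E D2 := by
    rw [hS1, hdec2]; exact hE.subadd _ hS1mem _ hD2mem
  have hWle : W ≤ ((2 * (n * l') * a : ℕ) : ℝ) := by
    have hsplit : W = (((∑ x ∈ Finset.range (m*d'), (a - c x))
        + ∑ x ∈ Finset.Ico (m*d') X, c x : ℕ) : ℝ) := by
      rw [hW, Finset.range_eq_Ico,
        ← Finset.sum_Ico_consecutive (fun x => |(c x : ℝ) - w2 x|) (Nat.zero_le (m*d')) hmdX]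
      push_cast
      congr 1
      · rw [← Finset.range_eq_Ico]
        refine Finset.sum_congr rfl (fun x hx => ?_)
        rw [Finset.mem_range] at hx
        rw [hw2]
        simp only [if_pos hx]
        rw [abs_sub_comm, Nat.cast_sub (hA1 x)]
        exact abs_of_nonneg (by
          have : (c x : ℝ) ≤ (a : ℝ) := Nat.cast_le.mpr (hA1 x)
          linarith)
      · refine Finset.sum_congr rfl (fun x hx => ?_)
        rw [Finset.mem_Ico] at hx
        rw [hw2]
        simp only [if_neg (not_lt.mpr hx.1), sub_zero]
        exact abs_of_nonneg (Nat.cast_nonneg _)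
    rw [hsplit]
    exact_mod_cast hWn
  have hgoal : |E (bsum T d (bsum T l f n) m) - (a:ℝ) * E (bsum T g f (m*d'))| ≤ W * E F := by
    rw [← hS2E, abs_sub_le_iff]
    constructor
    · linarith
    · linarith
  calc |E (bsum T d (bsum T l f n) m) - (a:ℝ) * E (bsum T g f (m*d'))|
      ≤ W * E F := hgoal
    _ ≤ ((2 * (n * l') * a : ℕ) : ℝ) * E F := mul_le_mul_of_nonneg_right hWle hEF
    _ = ((2 * (d' * a * l') * a : ℕ) : ℝ) * E F := by rw [hn]

end Key


set_option maxHeartbeats 1000000 in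
theorem stmt7 {Ω : Type*} (T : Ω → Ω) (H : Set (Ω → ℝ))
    (hH : IsHSpace T H) (E : (Ω → ℝ) → ℝ) (hE : IsISE T H E)
    (l d : ℕ) (hl : 0 < l) (hd : 0 < d)
    (Ed Edl Eg : (Ω → ℝ) → ℝ)
    (hEd : ∀ f ∈ H, Tendsto (fun n : ℕ => E (bsum T d f n) / n) atTop (𝓝 (Ed f)))
    (hEdl : ∀ f ∈ H, Tendsto (fun n : ℕ => Ed (bsum T l f n) / n) atTop (𝓝 (Edl f)))
    (hEg : ∀ f ∈ H,
      Tendsto (fun n : ℕ => E (bsum T (Nat.gcd l d) f n) / n) atTop (𝓝 (Eg f))) :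
    ∀ f ∈ H, Edl f = Eg f := by
  intro f hf
  classical
  have hgpos : 0 < Nat.gcd l d := Nat.gcd_pos_of_pos_left d hl
  set g := Nat.gcd l d with hgdef
  set l' := l / g with hl'def
  set d' := d / g with hd'def
  have hlg : l = g * l' := (Nat.mul_div_cancel' (Nat.gcd_dvd_left l d)).symm
  have hdg : d = g * d' := (Nat.mul_div_cancel' (Nat.gcd_dvd_right l d)).symm
  have hl' : 0 < l' := Nat.div_pos (Nat.le_of_dvd hl (Nat.gcd_dvd_left l d)) hgpos
  have hd' : 0 < d' := Nat.div_pos (Nat.le_of_dvd hd (Nat.gcd_dvd_right l d)) hgpos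
  have hcop : Nat.Coprime l' d' := Nat.coprime_div_gcd_div_gcd hgpos
  set F : Ω → ℝ := fun ω => |f ω| with hFdef
  have hval : ∀ a : ℕ, Ed (bsum T l f (d' * a)) = ((d' * a : ℕ) : ℝ) * Eg f := by
    intro a
    have hBl : bsum T l f (d' * a) ∈ H := bsum_mem hH hf l (d' * a)
    have h1 : Tendsto (fun m : ℕ => E (bsum T d (bsum T l f (d' * a)) m) / m) atTop
        (𝓝 (Ed (bsum T l f (d' * a)))) := hEd _ hBl
    set C : ℝ := ((2 * (d' * a * l') * a : ℕ) : ℝ) * E F with hC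
    have htend0 : Tendsto (fun m : ℕ =>
        (E (bsum T d (bsum T l f (d' * a)) m) - (a : ℝ) * E (bsum T g f (m * d'))) / m)
        atTop (𝓝 0) := by
      apply squeeze_zero_norm' (a := fun m : ℕ => C / m)
      · filter_upwards [Filter.eventually_ge_atTop (d' * a * l'),
          Filter.eventually_ge_atTop 1] with m hm2 hm1
        have hmd : d' * a * l' ≤ m * d' := le_trans hm2 (Nat.le_mul_of_pos_right m hd')
        have hest := key_est hH hE hf hl' hd' hlg hdg hcop a m hmd
        have hm0 : (0 : ℝ) < (m : ℝ) := by exact_mod_cast hm1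
        rw [Real.norm_eq_abs, abs_div, Nat.abs_cast]
        exact (div_le_div_iff_of_pos_right hm0).mpr hest
      · exact tendsto_const_div_atTop_nhds_zero_nat C
    have hmdtend : Tendsto (fun m : ℕ => m * d') atTop atTop :=
      Filter.tendsto_atTop_mono (fun m => Nat.le_mul_of_pos_right m hd') tendsto_id
    have htendg : Tendsto (fun m : ℕ => E (bsum T g f (m * d')) / ((m * d' : ℕ) : ℝ))
        atTop (𝓝 (Eg f)) := (hEg f hf).comp hmdtend
    have htend2 : Tendsto (fun m : ℕ => (a : ℝ) * E (bsum T g f (m * d')) / m) atTop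
        (𝓝 (((d' * a : ℕ) : ℝ) * Eg f)) := by
      have h2 := htendg.const_mul (((d' * a : ℕ) : ℝ))
      apply h2.congr'
      filter_upwards [Filter.eventually_ge_atTop 1] with m hm1
      have hm0 : (m : ℝ) ≠ 0 := Nat.cast_ne_zero.mpr (by omega)
      have hd0 : (d' : ℝ) ≠ 0 := Nat.cast_ne_zero.mpr hd'.ne'
      push_cast
      field_simp
    have hfinal : Tendsto (fun m : ℕ => E (bsum T d (bsum T l f (d' * a)) m) / m) atTop
        (𝓝 (0 + ((d' * a : ℕ) : ℝ) * Eg f)) := by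
      have h3 := htend0.add htend2
      apply h3.congr
      intro m
      rw [← add_div, sub_add_cancel]
    rw [zero_add] at hfinal
    exact tendsto_nhds_unique h1 hfinal
  have hdtend : Tendsto (fun a : ℕ => d' * (a + 1)) atTop atTop := by
    apply Filter.tendsto_atTop_mono (f := fun a : ℕ => a + 1)
    · intro a; exact Nat.le_mul_of_pos_left (a + 1) hd'
    · exact tendsto_add_atTop_nat 1
  have hsub : Tendsto (fun a : ℕ => Ed (bsum T l f (d' * (a + 1))) / ((d' * (a + 1) : ℕ) : ℝ))
      atTop (𝓝 (Edl f)) := (hEdl f hf).comp hdtend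
  have hconsteq : ∀ a : ℕ, Ed (bsum T l f (d' * (a + 1))) / ((d' * (a + 1) : ℕ) : ℝ) = Eg f := by
    intro a
    rw [hval (a + 1)]
    have hne : ((d' * (a + 1) : ℕ) : ℝ) ≠ 0 :=
      Nat.cast_ne_zero.mpr (Nat.mul_ne_zero hd'.ne' (Nat.succ_ne_zero a))
    exact mul_div_cancel_left₀ _ hne
  have hconst : Tendsto (fun _ : ℕ => Eg f) atTop (𝓝 (Edl f)) := hsub.congr hconsteq
  exact tendsto_nhds_unique hconst tendsto_const_nhds
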